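/- Let σ be a finite sequence of updates over ℤⁿ all of whose partial states x^(t) satisfy ‖x^(t)‖_∞ ≤ 2M−1, with final vector x ∈ {−M, M}ⁿ. If for some coordinate i and split σ = σ₁·σ₂ we have max over t of (freq σ₂^(t))_i ≥ (freq σ₂)_i + M, then x_i = −M. -/
import Mathlib

/-- The frequency vector of a stream: coordinatewise sum of updates. -/
def freq {n : ℕ} (σ : List (Fin n × ℤ)) : Fin n → ℤ :=
  fun i => (σ.map fun u => if u.1 = i then u.2 else 0).sum

lemma freq_append {n : ℕ} (a b : List (Fin n × ℤ)) (i : Fin n) :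
    freq (a ++ b) i = freq a i + freq b i := by
  simp [freq]

theorem statement1 {n : ℕ} (M : ℤ) (hM : 1 ≤ M) (σ₁ σ₂ : List (Fin n × ℤ))
    (hbox : ∀ t ≤ (σ₁ ++ σ₂).length, ∀ j : Fin n,
      |freq ((σ₁ ++ σ₂).take t) j| ≤ 2 * M - 1)
    (hfin : ∀ j : Fin n, freq (σ₁ ++ σ₂) j = -M ∨ freq (σ₁ ++ σ₂) j = M)
    (i : Fin n)
    (hmax : ∃ t ≤ σ₂.length, freq σ₂ i + M ≤ freq (σ₂.take t) i) :
    freq (σ₁ ++ σ₂) i = -M := by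
  obtain ⟨t, ht, hge⟩ := hmax
  have hb := hbox (σ₁.length + t) (by simp; omega) i
  have htake : (σ₁ ++ σ₂).take (σ₁.length + t) = σ₁ ++ σ₂.take t := by
    rw [List.take_append]
    simp
  rw [htake, freq_append] at hb
  rcases hfin i with h | h
  · exact h
  · exfalso
    rw [freq_append] at h
    have := abs_le.mp hb
    omega
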